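/- Suppose the loss ℓ is symmetric on the predictions used by F, i.e., there is a constant C with Σ_{j=1}^c ℓ(g(z), j) = C for every g ∈ F and every z ∈ Z, and suppose 0 ≤ η < 1 − 1/c. Then a classifier f ∈ F is a global minimizer of the clean risk R over F if and only if it is a global minimizer of the noisy risk R^η over F; in particular a symmetric loss is noise-tolerant under symmetric label noise with η < (c−1)/c. -/

import Mathlib

open MeasureTheory

/-- The clean risk `R(f) = ∫ ℓ(f(z), Y(z)) dμ(z)`. -/
noncomputable def cleanRisk {Z : Type*} [MeasurableSpace Z] (μ : Measure Z) {c : ℕ}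
    (Y : Z → Fin c) (ℓ : (Fin c → ℝ) → Fin c → ℝ) (f : Z → Fin c → ℝ) : ℝ :=
  ∫ z, ℓ (f z) (Y z) ∂μ

/-- The noisy risk under symmetric label noise with rate `η`:
`R^η(f) = ∫ [(1-η) ℓ(f(z), Y(z)) + (η/(c-1)) Σ_{j ≠ Y(z)} ℓ(f(z), j)] dμ(z)`. -/
noncomputable def noisyRisk {Z : Type*} [MeasurableSpace Z] (μ : Measure Z) {c : ℕ}
    (Y : Z → Fin c) (ℓ : (Fin c → ℝ) → Fin c → ℝ) (η : ℝ) (f : Z → Fin c → ℝ) : ℝ :=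
  ∫ z, ((1 - η) * ℓ (f z) (Y z)
      + (η / ((c : ℝ) - 1)) * ∑ j ∈ Finset.univ.erase (Y z), ℓ (f z) j) ∂μ

/-- If the loss is symmetric on the predictions used by `F`
(`Σ_j ℓ(g(z), j) = C` for all `g ∈ F`, `z ∈ Z`) and `0 ≤ η < 1 − 1/c`, then `f ∈ F`
minimizes the clean risk over `F` iff it minimizes the noisy risk over `F`
(noise tolerance of symmetric losses under symmetric label noise). -/
theorem symmetric_loss_noise_tolerant
    {Z : Type*} [MeasurableSpace Z] (μ : Measure Z) [IsProbabilityMeasure μ]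
    (c : ℕ) (hc : 2 ≤ c) (Y : Z → Fin c)
    (ℓ : (Fin c → ℝ) → Fin c → ℝ) (hℓ : ∀ v j, 0 ≤ ℓ v j)
    (F : Set (Z → Fin c → ℝ))
    (hint : ∀ g ∈ F, Integrable (fun z => ℓ (g z) (Y z)) μ)
    (C : ℝ) (hsym : ∀ g ∈ F, ∀ z : Z, ∑ j, ℓ (g z) j = C)
    (η : ℝ) (hη0 : 0 ≤ η) (hη : η < 1 - 1 / (c : ℝ)) :
    ∀ f ∈ F,
      ((∀ g ∈ F, cleanRisk μ Y ℓ f ≤ cleanRisk μ Y ℓ g) ↔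
        (∀ g ∈ F, noisyRisk μ Y ℓ η f ≤ noisyRisk μ Y ℓ η g)) := by
  have hc1 : (1 : ℝ) < (c : ℝ) := by
    have : (2 : ℝ) ≤ (c : ℝ) := by exact_mod_cast hc
    linarith
  set a : ℝ := 1 - η - η / ((c : ℝ) - 1) with ha_def
  have hcne : (c : ℝ) - 1 ≠ 0 := by linarith
  have ha : 0 < a := by
    have hpos : (0:ℝ) < (c : ℝ) - 1 := by linarith
    have h1 : (1 / (c:ℝ)) * c = 1 := by field_simp
    have hlt : η * (c : ℝ) < (c : ℝ) - 1 := by nlinarith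
    have h2 : η + η / ((c:ℝ) - 1) = η * c / ((c:ℝ) - 1) := by
      field_simp; ring
    rw [ha_def, sub_sub, sub_pos, h2, div_lt_one hpos]
    linarith
  have key : ∀ g ∈ F, noisyRisk μ Y ℓ η g
      = a * cleanRisk μ Y ℓ g + η * C / ((c : ℝ) - 1) := by
    intro g hg
    have hsum : ∀ z, ∑ j ∈ Finset.univ.erase (Y z), ℓ (g z) j = C - ℓ (g z) (Y z) := by
      intro z
      have := Finset.add_sum_erase Finset.univ (fun j => ℓ (g z) j) (Finset.mem_univ (Y z))
      have hs := hsym g hg z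
      linarith
    have heq : ∀ z, ((1 - η) * ℓ (g z) (Y z)
        + (η / ((c : ℝ) - 1)) * ∑ j ∈ Finset.univ.erase (Y z), ℓ (g z) j)
        = a * ℓ (g z) (Y z) + η * C / ((c : ℝ) - 1) := by
      intro z
      rw [hsum z, ha_def]
      field_simp
      ring
    unfold noisyRisk cleanRisk
    rw [integral_congr_ae (Filter.Eventually.of_forall heq)]
    rw [integral_add ((hint g hg).const_mul a) (integrable_const _)]
    rw [integral_const_mul, integral_const]
    simp
  intro f hf
  constructor
  · intro h g hg
    rw [key f hf, key g hg]
    exact add_le_add_left (mul_le_mul_of_nonneg_left (h g hg) ha.le) _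
  · intro h g hg
    have := h g hg
    rw [key f hf, key g hg] at this
    have h2 : a * cleanRisk μ Y ℓ f ≤ a * cleanRisk μ Y ℓ g :=
      (add_le_add_iff_right _).mp this
    exact le_of_mul_le_mul_left h2 ha
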